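/- arXiv:1502.02946 — 3 statements merged into one kernel-verified Lean document; each statement's English description precedes it below -/
import Mathlib

section
/- Let q be the real 2×2 matrix [[0,-1],[1,0]] acting on ℂ². For every complex number θ, the operator norm of the matrix exponential e^{qθ} equals e^{|Im θ|}; in particular |e^{qθ}v| ≤ e^{|Im θ|}|v| for all v ∈ ℂ². -/
open Complex in
private lemma core_ineq0 (E : ℝ) (a b x y : ℂ)
    (ha : ‖a‖ ≤ E) (hb : ‖b‖ ≤ E) :
    ‖(a+b)/2*x + I*(a-b)/2*y‖^2 + ‖I*(b-a)/2*x + (a+b)/2*y‖^2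
      ≤ E^2*(‖x‖^2 + ‖y‖^2) := by
  set u := x + I*y with hu
  set w := x - I*y with hw
  set c0 := (a+b)/2*x + I*(a-b)/2*y with hc0
  set c1 := I*(b-a)/2*x + (a+b)/2*y with hc1
  have h0 : (2:ℂ)*c0 = a*u + b*w := by rw [hc0, hu, hw]; ring
  have h1 : (2:ℂ)*c1 = I*(b*w) - I*(a*u) := by
    rw [hc1, hu, hw]; linear_combination ((a+b)*y) * Complex.I_sq
  have par : ∀ s t : ℂ, Complex.normSq (s+t) + Complex.normSq (I*t - I*s)
      = 2*(Complex.normSq s + Complex.normSq t) := by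
    intro s t
    simp [Complex.normSq_apply, Complex.mul_re, Complex.mul_im]
    ring
  have huw : Complex.normSq u + Complex.normSq w = 2*(Complex.normSq x + Complex.normSq y) := by
    rw [hu, hw]
    simp [Complex.normSq_apply, Complex.mul_re, Complex.mul_im]
    ring
  have h2 : (4:ℝ) * (Complex.normSq c0 + Complex.normSq c1)
      = 2*(Complex.normSq a * Complex.normSq u + Complex.normSq b * Complex.normSq w) := by
    have e0 := map_mul Complex.normSq 2 c0
    have e1 := map_mul Complex.normSq 2 c1
    have n2 : Complex.normSq 2 = 4 := by simp [Complex.normSq_apply]; norm_num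
    have := par (a*u) (b*w)
    rw [← h0, ← h1] at this
    rw [e0, e1, n2] at this
    rw [← map_mul, ← map_mul]
    linarith
  have ha2 : Complex.normSq a ≤ E^2 := by
    rw [← Complex.sq_norm]; exact pow_le_pow_left₀ (norm_nonneg a) ha 2
  have hb2 : Complex.normSq b ≤ E^2 := by
    rw [← Complex.sq_norm]; exact pow_le_pow_left₀ (norm_nonneg b) hb 2
  have nu := Complex.normSq_nonneg u
  have nw := Complex.normSq_nonneg w
  rw [Complex.sq_norm, Complex.sq_norm, Complex.sq_norm, Complex.sq_norm]
  nlinarith [mul_nonneg (sub_nonneg.2 ha2) nu, mul_nonneg (sub_nonneg.2 hb2) nw]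

open Complex in
private lemma clm_apply0 (A : Matrix (Fin 2) (Fin 2) ℂ) (v : EuclideanSpace ℂ (Fin 2)) (i : Fin 2) :
    (Matrix.toEuclideanCLM (𝕜 := ℂ) A v) i = A i 0 * v 0 + A i 1 * v 1 := by
  have h := congrFun (Matrix.ofLp_toEuclideanCLM (𝕜 := ℂ) A v) i
  rw [h]
  simp [Matrix.toLin'_apply, Matrix.mulVec, dotProduct, Fin.sum_univ_two]

open Complex in
private lemma exp_formula0 (θ : ℂ) :
    NormedSpace.exp (θ • (!![0, -1; 1, 0] : Matrix (Fin 2) (Fin 2) ℂ)) =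
    !![(Complex.exp (I*θ) + Complex.exp (-(I*θ)))/2, I*(Complex.exp (I*θ) - Complex.exp (-(I*θ)))/2;
       I*(Complex.exp (-(I*θ)) - Complex.exp (I*θ))/2, (Complex.exp (I*θ) + Complex.exp (-(I*θ)))/2] := by
  have hP : IsUnit (!![1,1;-I,I] : Matrix (Fin 2) (Fin 2) ℂ) := by
    rw [Matrix.isUnit_iff_isUnit_det, Matrix.det_fin_two_of]
    simp [Complex.ext_iff]
  have hinv : (!![1,1;-I,I] : Matrix (Fin 2) (Fin 2) ℂ)⁻¹ = !![1/2, I/2; 1/2, -(I/2)] := by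
    apply Matrix.inv_eq_right_inv
    ext i j
    fin_cases i <;> fin_cases j <;>
      simp [Matrix.mul_apply, Fin.sum_univ_two, Complex.ext_iff] <;> ring_nf <;>
      simp [Complex.ext_iff]
  have key : θ • (!![0, -1; 1, 0] : Matrix (Fin 2) (Fin 2) ℂ) =
      !![1,1;-I,I] * Matrix.diagonal ![I*θ, -(I*θ)] * (!![1,1;-I,I])⁻¹ := by
    rw [hinv]
    ext i j
    fin_cases i <;> fin_cases j <;>
      simp [Matrix.mul_apply, Matrix.vecMul, dotProduct, Fin.sum_univ_two,
        Matrix.diagonal_apply, Matrix.vecHead, Matrix.vecTail] <;> ring_nf <;>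
      simp [Complex.I_sq] <;> ring
  have hexp : NormedSpace.exp ![I*θ, -(I*θ)] = ![Complex.exp (I*θ), Complex.exp (-(I*θ))] := by
    rw [Pi.exp_def]; funext i; fin_cases i <;> simp [Complex.exp_eq_exp_ℂ]
  rw [key, Matrix.exp_conj _ _ hP, Matrix.exp_diagonal, hexp, hinv]
  ext i j
  fin_cases i <;> fin_cases j <;>
    simp [Matrix.mul_apply, Matrix.vecMul, dotProduct, Fin.sum_univ_two,
      Matrix.diagonal_apply, Matrix.vecHead, Matrix.vecTail] <;> ring_nf <;>
    simp [Complex.I_sq] <;> ring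

/-- The operator norm of `e^{qθ}` on `ℂ²`, where `q = [[0,-1],[1,0]]`, equals `e^{|Im θ|}`;
in particular `|e^{qθ} v| ≤ e^{|Im θ|} |v|` for all `v ∈ ℂ²`. -/
theorem stmt0 (θ : ℂ) (q : Matrix (Fin 2) (Fin 2) ℂ) (hq : q = !![0, -1; 1, 0]) :
    ‖Matrix.toEuclideanCLM (𝕜 := ℂ) (NormedSpace.exp (θ • q))‖ = Real.exp |θ.im| ∧
    ∀ v : EuclideanSpace ℂ (Fin 2),
      ‖Matrix.toEuclideanCLM (𝕜 := ℂ) (NormedSpace.exp (θ • q)) v‖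
        ≤ Real.exp |θ.im| * ‖v‖ := by
  subst hq
  set a := Complex.exp (Complex.I*θ) with haa
  set b := Complex.exp (-(Complex.I*θ)) with hbb
  set E := Real.exp |θ.im| with hE
  have hE0 : (0:ℝ) ≤ E := (Real.exp_pos _).le
  have habs_a : ‖a‖ = Real.exp (-θ.im) := by
    rw [haa, Complex.norm_exp]; congr 1; simp
  have habs_b : ‖b‖ = Real.exp θ.im := by
    rw [hbb, Complex.norm_exp]; congr 1; simp
  have ha : ‖a‖ ≤ E := by
    rw [habs_a, hE]; exact Real.exp_le_exp.2 (neg_le_abs θ.im)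
  have hb : ‖b‖ ≤ E := by
    rw [habs_b, hE]; exact Real.exp_le_exp.2 (le_abs_self θ.im)
  set T := Matrix.toEuclideanCLM (𝕜 := ℂ) (NormedSpace.exp (θ • !![0, -1; 1, 0])) with hT
  have hTapp : ∀ (v : EuclideanSpace ℂ (Fin 2)),
      T v 0 = (a+b)/2 * v 0 + Complex.I*(a-b)/2 * v 1 ∧
      T v 1 = Complex.I*(b-a)/2 * v 0 + (a+b)/2 * v 1 := by
    intro v
    rw [hT]
    constructor <;> rw [clm_apply0, exp_formula0] <;> simp [haa, hbb]
  have norm_sq : ∀ (x : EuclideanSpace ℂ (Fin 2)), ‖x‖ = Real.sqrt (‖x 0‖^2 + ‖x 1‖^2) := by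
    intro x
    rw [EuclideanSpace.norm_eq, Fin.sum_univ_two]
  have bound : ∀ v : EuclideanSpace ℂ (Fin 2), ‖T v‖ ≤ E * ‖v‖ := by
    intro v
    obtain ⟨h0, h1⟩ := hTapp v
    rw [norm_sq (T v), norm_sq v, h0, h1]
    rw [show E * Real.sqrt (‖v 0‖^2 + ‖v 1‖^2)
        = Real.sqrt (E^2 * (‖v 0‖^2 + ‖v 1‖^2)) by
      rw [Real.sqrt_mul (by positivity), Real.sqrt_sq hE0]]
    exact Real.sqrt_le_sqrt (core_ineq0 E a b (v 0) (v 1) ha hb)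
  refine ⟨le_antisymm (T.opNorm_le_bound hE0 bound) ?_, fun v => bound v⟩
  -- lower bound
  rcases le_total 0 θ.im with him | him
  · -- E = |b|, witness v = (1, I)
    set v : EuclideanSpace ℂ (Fin 2) := (WithLp.equiv 2 (Fin 2 → ℂ)).symm ![1, Complex.I] with hv
    have hv0 : v 0 = 1 := rfl
    have hv1 : v 1 = Complex.I := rfl
    obtain ⟨h0, h1⟩ := hTapp v
    rw [hv0, hv1] at h0 h1
    have e0 : T v 0 = b := by rw [h0]; linear_combination ((a-b)/2) * Complex.I_sq
    have e1 : T v 1 = Complex.I * b := by rw [h1]; ring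
    have hnv : ‖v‖ = Real.sqrt 2 := by
      rw [norm_sq v, hv0, hv1]; norm_num
    have hnTv : ‖T v‖ = E * Real.sqrt 2 := by
      rw [norm_sq (T v), e0, e1]
      rw [norm_mul, Complex.norm_I, one_mul, habs_b]
      rw [hE, abs_of_nonneg him]
      rw [show Real.exp θ.im ^2 + Real.exp θ.im^2 = (Real.exp θ.im)^2 * 2 by ring]
      rw [Real.sqrt_mul (by positivity), Real.sqrt_sq (Real.exp_pos _).le]
    have := T.le_opNorm v
    rw [hnTv, hnv] at this
    have h2 : (0:ℝ) < Real.sqrt 2 := by positivity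
    exact le_of_mul_le_mul_right this h2
  · set v : EuclideanSpace ℂ (Fin 2) := (WithLp.equiv 2 (Fin 2 → ℂ)).symm ![1, -Complex.I] with hv
    have hv0 : v 0 = 1 := rfl
    have hv1 : v 1 = -Complex.I := rfl
    obtain ⟨h0, h1⟩ := hTapp v
    rw [hv0, hv1] at h0 h1
    have e0 : T v 0 = a := by rw [h0]; linear_combination (-(a-b)/2) * Complex.I_sq
    have e1 : T v 1 = -(Complex.I * a) := by rw [h1]; ring
    have hnv : ‖v‖ = Real.sqrt 2 := by
      rw [norm_sq v, hv0, hv1]; norm_num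
    have hnTv : ‖T v‖ = E * Real.sqrt 2 := by
      rw [norm_sq (T v), e0, e1]
      rw [show ‖-(Complex.I * a)‖ = ‖a‖ by simp]
      rw [habs_a, hE, abs_of_nonpos him]
      rw [show Real.exp (-θ.im) ^2 + Real.exp (-θ.im)^2 = (Real.exp (-θ.im))^2 * 2 by ring]
      rw [Real.sqrt_mul (by positivity), Real.sqrt_sq (Real.exp_pos _).le]
    have := T.le_opNorm v
    rw [hnTv, hnv] at this
    have h2 : (0:ℝ) < Real.sqrt 2 := by positivity
    exact le_of_mul_le_mul_right this h2
end

section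
/- (Axial gauge bound on a unit lattice.) Let A be a real gauge field on the bonds of a finite box in ℤ³ and fix a reference point y in the box. There exists a function λ on the box such that A = A' + ∂λ, where A' depends only on the field strength dA, and |A'(b)| ≤ d(b,y)·‖dA‖_∞ for every bond b, where d(b,y) is the sup-metric distance from b to y. -/
namespace Stmt9Aux

/-- signed sum of `f` over the integer interval from `a` to `b`. -/
noncomputable def lineSum (f : ℤ → ℝ) (a b : ℤ) : ℝ :=
  if a ≤ b then ∑ n ∈ Finset.Ico a b, f n else -∑ n ∈ Finset.Ico b a, f n

theorem Ico_succ_sum (a b : ℤ) (h : a ≤ b) (f : ℤ → ℝ) :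
    (∑ k ∈ Finset.Ico a (b + 1), f k) = (∑ k ∈ Finset.Ico a b, f k) + f b := by
  rw [← Finset.Ico_union_Ico_eq_Ico h (by omega : b ≤ b+1),
    Finset.sum_union (Finset.Ico_disjoint_Ico_consecutive a b (b+1))]
  congr 1
  have : Finset.Ico b (b+1) = {b} := by ext n; simp; omega
  rw [this, Finset.sum_singleton]

theorem lineSum_step (f : ℤ → ℝ) (a b : ℤ) :
    lineSum f a (b + 1) = lineSum f a b + f b := by
  unfold lineSum
  rcases le_or_gt a b with h | h
  · rw [if_pos h, if_pos (by omega), Ico_succ_sum a b h]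
  rcases lt_or_eq_of_le (by omega : b + 1 ≤ a) with h2 | h2
  · rw [if_neg (by omega), if_neg (by omega)]
    have hsplit : ∑ n ∈ Finset.Ico b a, f n = f b + ∑ n ∈ Finset.Ico (b+1) a, f n := by
      rw [← Finset.Ico_union_Ico_eq_Ico (by omega : b ≤ b+1) (by omega : b+1 ≤ a),
        Finset.sum_union (Finset.Ico_disjoint_Ico_consecutive b (b+1) a)]
      congr 1
      have hb1 : Finset.Ico b (b+1) = {b} := by ext n; simp; omega
      rw [hb1, Finset.sum_singleton]
    rw [hsplit]; ring
  · rw [← h2, if_pos le_rfl, if_neg (by omega)]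
    have hb1 : Finset.Ico b (b+1) = {b} := by ext n; simp; omega
    simp [hb1]

theorem lineSum_symm (f : ℤ → ℝ) (a b : ℤ) : lineSum f a b = -lineSum f b a := by
  unfold lineSum
  rcases lt_trichotomy a b with h | h | h
  · rw [if_pos h.le, if_neg (by omega)]; ring
  · subst h; simp
  · rw [if_neg (show ¬ a ≤ b by omega), if_pos h.le]

theorem lineSum_telescope_aux (H : ℤ → ℝ) (a b : ℤ) (hab : a ≤ b) :
    lineSum (fun n => H (n + 1) - H n) a b = H b - H a := by
  refine Int.le_induction (motive := fun b _ => lineSum (fun n => H (n + 1) - H n) a b = H b - H a)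
    ?_ (fun n hn ih => ?_) b hab
  · simp [lineSum]
  · rw [lineSum_step, ih]; ring

theorem lineSum_telescope (H : ℤ → ℝ) (a b : ℤ) :
    lineSum (fun n => H (n + 1) - H n) a b = H b - H a := by
  rcases le_total a b with h | h
  · exact lineSum_telescope_aux H a b h
  · rw [lineSum_symm, lineSum_telescope_aux H b a h]; ring

theorem lineSum_add (f g : ℤ → ℝ) (a b : ℤ) :
    lineSum (fun n => f n + g n) a b = lineSum f a b + lineSum g a b := by
  unfold lineSum
  rcases le_or_gt a b with h | h
  · simp [if_pos h, Finset.sum_add_distrib]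
  · simp [if_neg (by omega : ¬ a ≤ b), Finset.sum_add_distrib]; ring

theorem lineSum_sub (f g : ℤ → ℝ) (a b : ℤ) :
    lineSum (fun n => f n - g n) a b = lineSum f a b - lineSum g a b := by
  unfold lineSum
  rcases le_or_gt a b with h | h
  · simp [if_pos h, Finset.sum_sub_distrib]
  · simp [if_neg (by omega : ¬ a ≤ b), Finset.sum_sub_distrib]; ring

theorem lineSum_congr (f g : ℤ → ℝ) (a b : ℤ)
    (h : ∀ n, min a b ≤ n → n < max a b → f n = g n) :
    lineSum f a b = lineSum g a b := by
  unfold lineSum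
  rcases le_or_gt a b with hab | hab
  · rw [if_pos hab, if_pos hab]
    refine Finset.sum_congr rfl fun n hn => ?_
    rw [Finset.mem_Ico] at hn
    exact h n (by omega) (by rw [max_eq_right hab]; omega)
  · rw [if_neg (by omega), if_neg (by omega)]
    congr 1
    refine Finset.sum_congr rfl fun n hn => ?_
    rw [Finset.mem_Ico] at hn
    exact h n (by omega) (by rw [max_eq_left hab.le]; omega)

theorem lineSum_comb (p f g H : ℤ → ℝ) (a b : ℤ)
    (h : ∀ n, p n = f n - g n - (H (n + 1) - H n)) :
    lineSum p a b = lineSum f a b - lineSum g a b - (H b - H a) := by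
  have e1 : lineSum p a b = lineSum (fun n => (f n - g n) - (H (n + 1) - H n)) a b :=
    lineSum_congr _ _ _ _ (fun n _ _ => h n)
  have e2 : lineSum (fun n => (f n - g n) - (H (n + 1) - H n)) a b
      = lineSum (fun n => f n - g n) a b - lineSum (fun n => H (n + 1) - H n) a b :=
    lineSum_sub (fun n => f n - g n) (fun n => H (n + 1) - H n) a b
  have e3 : lineSum (fun n => f n - g n) a b = lineSum f a b - lineSum g a b :=
    lineSum_sub f g a b
  have e4 : lineSum (fun n => H (n + 1) - H n) a b = H b - H a :=
    lineSum_telescope H a b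
  rw [e1, e2, e3, e4]

theorem lineSum_abs_le (f : ℤ → ℝ) (a b : ℤ) (M : ℝ)
    (h : ∀ n, min a b ≤ n → n < max a b → |f n| ≤ M) :
    |lineSum f a b| ≤ ((b - a).natAbs : ℝ) * M := by
  have key : ∀ (c d : ℤ), c ≤ d → (∀ n, c ≤ n → n < d → |f n| ≤ M) →
      |∑ n ∈ Finset.Ico c d, f n| ≤ ((d - c).natAbs : ℝ) * M := by
    intro c d hcd hb
    calc |∑ n ∈ Finset.Ico c d, f n| ≤ ∑ n ∈ Finset.Ico c d, |f n| :=
          Finset.abs_sum_le_sum_abs _ _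
      _ ≤ ∑ _n ∈ Finset.Ico c d, M := by
          refine Finset.sum_le_sum fun n hn => ?_
          rw [Finset.mem_Ico] at hn
          exact hb n hn.1 hn.2
      _ = ((d - c).natAbs : ℝ) * M := by
          rw [Finset.sum_const, Int.card_Ico, nsmul_eq_mul]
          congr 1
          have : (d - c).toNat = (d - c).natAbs := by omega
          rw [← this]
  unfold lineSum
  rcases le_or_gt a b with hab | hab
  · rw [if_pos hab]
    exact key a b hab fun n h1 h2 => h n (by omega) (by rw [max_eq_right hab]; omega)
  · rw [if_neg (by omega), abs_neg]
    have := key b a hab.le fun n h1 h2 => h n (by omega) (by rw [max_eq_left hab.le]; omega)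
    have e : (a - b).natAbs = (b - a).natAbs := by omega
    rwa [e] at this

/-- point shifted by one in direction `μ`. -/
def bump (x : Fin 3 → ℤ) (μ : Fin 3) : Fin 3 → ℤ := Function.update x μ (x μ + 1)

/-- explicit plaquette field strength. -/
def plaq (A : (Fin 3 → ℤ) → Fin 3 → ℝ) (v : Fin 3 → ℤ) (μ ν : Fin 3) : ℝ :=
  A v μ + A (bump v μ) ν - A (bump v ν) μ - A v ν

/-- sum of `A` along the coordinate-ordered path from `y` to `x`,
moving coordinates in the order `c0, c1, c2`. -/
noncomputable def pathSum (A : (Fin 3 → ℤ) → Fin 3 → ℝ) (y : Fin 3 → ℤ)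
    (c0 c1 c2 : Fin 3) (x : Fin 3 → ℤ) : ℝ :=
  lineSum (fun n => A (Function.update y c0 n) c0) (y c0) (x c0) +
  lineSum (fun n => A (Function.update (Function.update y c0 (x c0)) c1 n) c1)
    (y c1) (x c1) +
  lineSum (fun n => A (Function.update (Function.update (Function.update y c0 (x c0))
    c1 (x c1)) c2 n) c2) (y c2) (x c2)

theorem ext3 {c0 c1 c2 : Fin 3} (hcov : ∀ i : Fin 3, i = c0 ∨ i = c1 ∨ i = c2)
    {u v : Fin 3 → ℤ} (h0 : u c0 = v c0) (h1 : u c1 = v c1) (h2 : u c2 = v c2) : u = v := by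
  funext i
  rcases hcov i with h | h | h <;> subst h <;> assumption

section Cases
variable (A : (Fin 3 → ℤ) → Fin 3 → ℝ) (y : Fin 3 → ℤ) (c0 c1 c2 : Fin 3)
  (h01 : c0 ≠ c1) (h02 : c0 ≠ c2) (h12 : c1 ≠ c2)
  (hcov : ∀ i : Fin 3, i = c0 ∨ i = c1 ∨ i = c2) (x : Fin 3 → ℤ)

include h01 h02 h12 hcov in
theorem caseA : A x c2 - (pathSum A y c0 c1 c2 (bump x c2) - pathSum A y c0 c1 c2 x) = 0 := by
  have b0 : bump x c2 c0 = x c0 := by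
    simp [bump, Function.update_apply, h01, h02, h12, Ne.symm h01, Ne.symm h02, Ne.symm h12]
  have b1 : bump x c2 c1 = x c1 := by
    simp [bump, Function.update_apply, h01, h02, h12, Ne.symm h01, Ne.symm h02, Ne.symm h12]
  have b2 : bump x c2 c2 = x c2 + 1 := by
    simp [bump, Function.update_apply]
  have hq : Function.update (Function.update (Function.update y c0 (x c0)) c1 (x c1))
      c2 (x c2) = x := by
    apply ext3 hcov <;>
      simp [Function.update_apply, h01, h02, h12, Ne.symm h01, Ne.symm h02, Ne.symm h12]
  unfold pathSum
  rw [b0, b1, b2, lineSum_step, hq]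
  ring

include h01 h02 h12 hcov in
theorem caseB :
    A x c1 - (pathSum A y c0 c1 c2 (bump x c1) - pathSum A y c0 c1 c2 x)
      = - lineSum (fun n => plaq A (Function.update x c2 n) c1 c2) (y c2) (x c2) := by
  have b0 : bump x c1 c0 = x c0 := by
    simp [bump, Function.update_apply, h01, h02, h12, Ne.symm h01, Ne.symm h02, Ne.symm h12]
  have b1 : bump x c1 c1 = x c1 + 1 := by
    simp [bump, Function.update_apply]
  have b2 : bump x c1 c2 = x c2 := by
    simp [bump, Function.update_apply, h01, h02, h12, Ne.symm h01, Ne.symm h02, Ne.symm h12]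
  have hxbar : Function.update (Function.update y c0 (x c0)) c1 (x c1)
      = Function.update x c2 (y c2) := by
    apply ext3 hcov <;>
      simp [Function.update_apply, h01, h02, h12, Ne.symm h01, Ne.symm h02, Ne.symm h12]
  have hdecomp : ∀ n : ℤ, plaq A (Function.update x c2 n) c1 c2
      = A (Function.update (Function.update (Function.update y c0 (x c0))
            c1 (x c1 + 1)) c2 n) c2
        - A (Function.update (Function.update (Function.update y c0 (x c0))
            c1 (x c1)) c2 n) c2
        - (A (Function.update x c2 (n + 1)) c1 - A (Function.update x c2 n) c1) := by
    intro n
    have e1 : bump (Function.update x c2 n) c1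
        = Function.update (Function.update (Function.update y c0 (x c0))
            c1 (x c1 + 1)) c2 n := by
      apply ext3 hcov <;>
        simp [bump, Function.update_apply, h01, h02, h12, Ne.symm h01, Ne.symm h02, Ne.symm h12]
    have e2 : bump (Function.update x c2 n) c2 = Function.update x c2 (n + 1) := by
      apply ext3 hcov <;>
        simp [bump, Function.update_apply, h01, h02, h12, Ne.symm h01, Ne.symm h02, Ne.symm h12]
    have e3 : Function.update (Function.update (Function.update y c0 (x c0))
        c1 (x c1)) c2 n = Function.update x c2 n := by
      apply ext3 hcov <;>
        simp [Function.update_apply, h01, h02, h12, Ne.symm h01, Ne.symm h02, Ne.symm h12]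
    have hval : Function.update x c2 n c1 = x c1 :=
      Function.update_of_ne h12 _ _
    simp only [plaq, e1, e2, e3]
    ring
  have hL := lineSum_comb (fun n => plaq A (Function.update x c2 n) c1 c2)
    (fun m => A (Function.update (Function.update (Function.update y c0 (x c0))
      c1 (x c1 + 1)) c2 m) c2)
    (fun m => A (Function.update (Function.update (Function.update y c0 (x c0))
      c1 (x c1)) c2 m) c2)
    (fun m => A (Function.update x c2 m) c1) (y c2) (x c2) hdecomp
  rw [hL]
  unfold pathSum
  rw [b0, b1, b2, lineSum_step]
  have hx2 : Function.update x c2 (x c2) = x := Function.update_eq_self _ _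
  simp only [hxbar, hx2]
  ring

include h01 h02 h12 hcov in
theorem caseC :
    A x c0 - (pathSum A y c0 c1 c2 (bump x c0) - pathSum A y c0 c1 c2 x)
      = - (lineSum (fun n => plaq A (Function.update (Function.update x c2 (y c2)) c1 n)
            c0 c1) (y c1) (x c1)
          + lineSum (fun n => plaq A (Function.update x c2 n) c0 c2) (y c2) (x c2)) := by
  have b0 : bump x c0 c0 = x c0 + 1 := by
    simp [bump, Function.update_apply]
  have b1 : bump x c0 c1 = x c1 := by
    simp [bump, Function.update_apply, h01, h02, h12, Ne.symm h01, Ne.symm h02, Ne.symm h12]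
  have b2 : bump x c0 c2 = x c2 := by
    simp [bump, Function.update_apply, h01, h02, h12, Ne.symm h01, Ne.symm h02, Ne.symm h12]
  have hdecomp1 : ∀ n : ℤ,
      plaq A (Function.update (Function.update x c2 (y c2)) c1 n) c0 c1
      = A (Function.update (Function.update y c0 (x c0 + 1)) c1 n) c1
        - A (Function.update (Function.update y c0 (x c0)) c1 n) c1
        - (A (Function.update (Function.update x c2 (y c2)) c1 (n + 1)) c0
            - A (Function.update (Function.update x c2 (y c2)) c1 n) c0) := by
    intro n
    have e1 : bump (Function.update (Function.update x c2 (y c2)) c1 n) c0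
        = Function.update (Function.update y c0 (x c0 + 1)) c1 n := by
      apply ext3 hcov <;>
        simp [bump, Function.update_apply, h01, h02, h12, Ne.symm h01, Ne.symm h02, Ne.symm h12]
    have e2 : bump (Function.update (Function.update x c2 (y c2)) c1 n) c1
        = Function.update (Function.update x c2 (y c2)) c1 (n + 1) := by
      apply ext3 hcov <;>
        simp [bump, Function.update_apply, h01, h02, h12, Ne.symm h01, Ne.symm h02, Ne.symm h12]
    have e3 : Function.update (Function.update x c2 (y c2)) c1 n
        = Function.update (Function.update y c0 (x c0)) c1 n := by
      apply ext3 hcov <;>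
        simp [Function.update_apply, h01, h02, h12, Ne.symm h01, Ne.symm h02, Ne.symm h12]
    simp only [plaq, e1, e2]
    rw [show A (Function.update (Function.update x c2 (y c2)) c1 n) c1
        = A (Function.update (Function.update y c0 (x c0)) c1 n) c1 by rw [e3]]
    ring
  have hdecomp2 : ∀ n : ℤ, plaq A (Function.update x c2 n) c0 c2
      = A (Function.update (Function.update (Function.update y c0 (x c0 + 1))
            c1 (x c1)) c2 n) c2
        - A (Function.update (Function.update (Function.update y c0 (x c0))
            c1 (x c1)) c2 n) c2
        - (A (Function.update x c2 (n + 1)) c0 - A (Function.update x c2 n) c0) := by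
    intro n
    have e1 : bump (Function.update x c2 n) c0
        = Function.update (Function.update (Function.update y c0 (x c0 + 1))
            c1 (x c1)) c2 n := by
      apply ext3 hcov <;>
        simp [bump, Function.update_apply, h01, h02, h12, Ne.symm h01, Ne.symm h02, Ne.symm h12]
    have e2 : bump (Function.update x c2 n) c2 = Function.update x c2 (n + 1) := by
      apply ext3 hcov <;>
        simp [bump, Function.update_apply, h01, h02, h12, Ne.symm h01, Ne.symm h02, Ne.symm h12]
    have e3 : Function.update (Function.update (Function.update y c0 (x c0))
        c1 (x c1)) c2 n = Function.update x c2 n := by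
      apply ext3 hcov <;>
        simp [Function.update_apply, h01, h02, h12, Ne.symm h01, Ne.symm h02, Ne.symm h12]
    simp only [plaq, e1, e2, e3]
    ring
  have hL1 := lineSum_comb
    (fun n => plaq A (Function.update (Function.update x c2 (y c2)) c1 n) c0 c1)
    (fun m => A (Function.update (Function.update y c0 (x c0 + 1)) c1 m) c1)
    (fun m => A (Function.update (Function.update y c0 (x c0)) c1 m) c1)
    (fun m => A (Function.update (Function.update x c2 (y c2)) c1 m) c0)
    (y c1) (x c1) hdecomp1
  have hL2 := lineSum_comb (fun n => plaq A (Function.update x c2 n) c0 c2)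
    (fun m => A (Function.update (Function.update (Function.update y c0 (x c0 + 1))
      c1 (x c1)) c2 m) c2)
    (fun m => A (Function.update (Function.update (Function.update y c0 (x c0))
      c1 (x c1)) c2 m) c2)
    (fun m => A (Function.update x c2 m) c0) (y c2) (x c2) hdecomp2
  rw [hL1, hL2]
  unfold pathSum
  rw [b0, b1, b2, lineSum_step]
  have k1 : Function.update (Function.update x c2 (y c2)) c1 (x c1)
      = Function.update x c2 (y c2) := by
    apply ext3 hcov <;>
      simp [Function.update_apply, h01, h02, h12, Ne.symm h01, Ne.symm h02, Ne.symm h12]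
  have k2 : Function.update (Function.update x c2 (y c2)) c1 (y c1)
      = Function.update y c0 (x c0) := by
    apply ext3 hcov <;>
      simp [Function.update_apply, h01, h02, h12, Ne.symm h01, Ne.symm h02, Ne.symm h12]
  have k3 : Function.update x c2 (x c2) = x := Function.update_eq_self _ _
  simp only [k1, k2, k3]
  ring

end Cases
/-- averaged axial-gauge potential. -/
noncomputable def lamF (A : (Fin 3 → ℤ) → Fin 3 → ℝ) (y v : Fin 3 → ℤ) : ℝ :=
  (pathSum A y 0 1 2 v + pathSum A y 1 2 0 v + pathSum A y 2 0 1 v) / 3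

theorem rep0 (A : (Fin 3 → ℤ) → Fin 3 → ℝ) (y x : Fin 3 → ℤ) :
    A x 0 - (lamF A y (bump x 0) - lamF A y x)
      = -(1/3) * (lineSum (fun n => plaq A (Function.update (Function.update x 2 (y 2)) 1 n)
            0 1) (y 1) (x 1)
          + lineSum (fun n => plaq A (Function.update x 2 n) 0 2) (y 2) (x 2)
          + lineSum (fun n => plaq A (Function.update x 1 n) 0 1) (y 1) (x 1)) := by
  have hC := caseC A y 0 1 2 (by decide) (by decide) (by decide) (by decide) x
  have hA := caseA A y 1 2 0 (by decide) (by decide) (by decide) (by decide) x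
  have hB := caseB A y 2 0 1 (by decide) (by decide) (by decide) (by decide) x
  unfold lamF
  linarith [hC, hA, hB]

theorem rep1 (A : (Fin 3 → ℤ) → Fin 3 → ℝ) (y x : Fin 3 → ℤ) :
    A x 1 - (lamF A y (bump x 1) - lamF A y x)
      = -(1/3) * (lineSum (fun n => plaq A (Function.update x 2 n) 1 2) (y 2) (x 2)
          + lineSum (fun n => plaq A (Function.update (Function.update x 0 (y 0)) 2 n)
            1 2) (y 2) (x 2)
          + lineSum (fun n => plaq A (Function.update x 0 n) 1 0) (y 0) (x 0)) := by
  have hB := caseB A y 0 1 2 (by decide) (by decide) (by decide) (by decide) x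
  have hC := caseC A y 1 2 0 (by decide) (by decide) (by decide) (by decide) x
  have hA := caseA A y 2 0 1 (by decide) (by decide) (by decide) (by decide) x
  unfold lamF
  linarith [hC, hA, hB]

theorem rep2 (A : (Fin 3 → ℤ) → Fin 3 → ℝ) (y x : Fin 3 → ℤ) :
    A x 2 - (lamF A y (bump x 2) - lamF A y x)
      = -(1/3) * (lineSum (fun n => plaq A (Function.update x 0 n) 2 0) (y 0) (x 0)
          + lineSum (fun n => plaq A (Function.update (Function.update x 1 (y 1)) 0 n)
            2 0) (y 0) (x 0)
          + lineSum (fun n => plaq A (Function.update x 1 n) 2 1) (y 1) (x 1)) := by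
  have hA := caseA A y 0 1 2 (by decide) (by decide) (by decide) (by decide) x
  have hB := caseB A y 1 2 0 (by decide) (by decide) (by decide) (by decide) x
  have hC := caseC A y 2 0 1 (by decide) (by decide) (by decide) (by decide) x
  unfold lamF
  linarith [hC, hA, hB]

end Stmt9Aux

open Stmt9Aux

/-- Axial gauge bound on a unit lattice: on a finite box in `ℤ³` with a reference point `y`,
every gauge field `A` on bonds decomposes as `A = A' + ∂λ` where `A' = T A` depends only on the
field strength `dA`, and `|A'(b)| ≤ d(b,y) ‖dA‖_∞` for every bond `b` of the box.

Bonds are encoded as pairs `(x, μ)` representing `(x, x + e_μ)`; the field strength on the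
plaquette `(x, μ, ν)` is `A x μ + A (x+e_μ) ν - A (x+e_ν) μ - A x ν`; `d(b,y)` is the sup-metric
distance from the bond (the larger of the distances of its endpoints) to `y`. -/
theorem stmt9 (N : ℕ) (y : Fin 3 → ℤ)
    (InBox : (Fin 3 → ℤ) → Prop)
    (hBox : ∀ x, InBox x ↔ ∀ i, 0 ≤ x i ∧ x i ≤ (N : ℤ))
    (hy : InBox y)
    (eV : Fin 3 → Fin 3 → ℤ) (heV : ∀ μ ν, eV μ ν = if ν = μ then 1 else 0)
    (dA : ((Fin 3 → ℤ) → Fin 3 → ℝ) → (Fin 3 → ℤ) → Fin 3 → Fin 3 → ℝ)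
    (hdA : ∀ A x μ ν, dA A x μ ν =
      A x μ + A (x + eV μ) ν - A (x + eV ν) μ - A x ν)
    (bondDist : (Fin 3 → ℤ) → Fin 3 → ℝ)
    (hbd : ∀ x μ, bondDist x μ =
      ((max (Finset.univ.sup fun i => (x i - y i).natAbs)
            (Finset.univ.sup fun i => ((x + eV μ) i - y i).natAbs) : ℕ) : ℝ)) :
    ∃ T : ((Fin 3 → ℤ) → Fin 3 → ℝ) → ((Fin 3 → ℤ) → Fin 3 → ℝ),
      -- `T A` depends on `A` only through the field strength `dA` (on plaquettes of the box)
      (∀ A₁ A₂ : (Fin 3 → ℤ) → Fin 3 → ℝ,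
        (∀ x μ ν, InBox x → InBox (x + eV μ) → InBox (x + eV ν) → InBox (x + eV μ + eV ν) →
          dA A₁ x μ ν = dA A₂ x μ ν) →
        ∀ x μ, InBox x → InBox (x + eV μ) → T A₁ x μ = T A₂ x μ) ∧
      ∀ A : (Fin 3 → ℤ) → Fin 3 → ℝ,
        -- `A = A' + ∂λ` on bonds of the box, with `A' = T A`
        (∃ lam : (Fin 3 → ℤ) → ℝ, ∀ x μ, InBox x → InBox (x + eV μ) →
          A x μ = T A x μ + (lam (x + eV μ) - lam x)) ∧
        -- the bound `|A'(b)| ≤ d(b,y) ‖dA‖_∞`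
        (∀ M : ℝ,
          (∀ x μ ν, InBox x → InBox (x + eV μ) → InBox (x + eV ν) →
            InBox (x + eV μ + eV ν) → |dA A x μ ν| ≤ M) →
          ∀ x μ, InBox x → InBox (x + eV μ) → |T A x μ| ≤ bondDist x μ * M) := by
  classical
  have hμ3 : ∀ μ : Fin 3, μ = 0 ∨ μ = 1 ∨ μ = 2 := by decide
  have haddc : ∀ (v : Fin 3 → ℤ) (α i : Fin 3),
      (v + eV α) i = v i + (if i = α then 1 else 0) := by
    intro v α i
    simp [heV]
  have hbump : ∀ (x : Fin 3 → ℤ) (μ : Fin 3), x + eV μ = bump x μ := by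
    intro x μ
    funext i
    rw [haddc]
    by_cases h : i = μ
    · subst h; simp [bump]
    · simp [bump, Function.update_of_ne h, h]
  have hplaq : ∀ (B : (Fin 3 → ℤ) → Fin 3 → ℝ) v (α β : Fin 3),
      dA B v α β = plaq B v α β := by
    intro B v α β
    rw [hdA, hbump v α, hbump v β]
    rfl
  have hmem : ∀ (v : Fin 3 → ℤ) (α β : Fin 3), α ≠ β → (∀ i, 0 ≤ v i ∧ v i ≤ (N:ℤ)) →
      v α + 1 ≤ (N:ℤ) → v β + 1 ≤ (N:ℤ) →
      InBox v ∧ InBox (v + eV α) ∧ InBox (v + eV β) ∧ InBox (v + eV α + eV β) := by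
    intro v α β hne hv hα hβ
    refine ⟨(hBox v).2 hv, (hBox _).2 fun i => ?_, (hBox _).2 fun i => ?_,
      (hBox _).2 fun i => ?_⟩
    · rw [haddc]
      have h1 := hv i
      by_cases h : i = α
      · rw [if_pos h]; subst h; omega
      · rw [if_neg h]; omega
    · rw [haddc]
      have h1 := hv i
      by_cases h : i = β
      · rw [if_pos h]; subst h; omega
      · rw [if_neg h]; omega
    · rw [haddc, haddc]
      have h1 := hv i
      by_cases ha : i = α <;> by_cases hb : i = β
      · subst ha; exact absurd hb hne
      · rw [if_pos ha, if_neg hb]; subst ha; omega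
      · rw [if_neg ha, if_pos hb]; subst hb; omega
      · rw [if_neg ha, if_neg hb]; omega
  refine ⟨fun A x μ => A x μ - (lamF A y (x + eV μ) - lamF A y x), ?_, ?_⟩
  · -- gauge invariance
    intro A₁ A₂ hEq x μ hx hx'
    have hxB : ∀ i, 0 ≤ x i ∧ x i ≤ (N:ℤ) := (hBox x).1 hx
    have hyB : ∀ i, 0 ≤ y i ∧ y i ≤ (N:ℤ) := (hBox y).1 hy
    have hx'B := (hBox _).1 hx'
    have hμN : x μ + 1 ≤ (N:ℤ) := by
      have h := (hx'B μ).2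
      rwa [haddc, if_pos rfl] at h
    have key : ∀ (v : Fin 3 → ℤ) (α β : Fin 3), α ≠ β → (∀ i, 0 ≤ v i ∧ v i ≤ (N:ℤ)) →
        v α + 1 ≤ (N:ℤ) → v β + 1 ≤ (N:ℤ) → plaq A₁ v α β = plaq A₂ v α β := by
      intro v α β hne hv hα hβ
      rw [← hplaq A₁ v α β, ← hplaq A₂ v α β]
      obtain ⟨m1, m2, m3, m4⟩ := hmem v α β hne hv hα hβ
      exact hEq v α β m1 m2 m3 m4
    have e0 := hxB 0; have e1 := hxB 1; have e2 := hxB 2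
    have f0 := hyB 0; have f1 := hyB 1; have f2 := hyB 2
    rcases hμ3 μ with rfl | rfl | rfl
    · simp only []
      rw [hbump x 0, rep0 A₁ y x, rep0 A₂ y x]
      congr 1
      congr 1
      congr 1
      · refine lineSum_congr _ _ _ _ fun n h1 h2 => ?_
        have hn0 : (0:ℤ) ≤ n := le_trans (le_min f1.1 e1.1) h1
        have hnN : n < (N:ℤ) := lt_of_lt_of_le h2 (max_le f1.2 e1.2)
        refine key (Function.update (Function.update x 2 (y 2)) 1 n) 0 1 (by decide) (fun i => by
            rcases hμ3 i with rfl | rfl | rfl <;> simp [Function.update_apply] <;> omega)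
          (by simp [Function.update_apply] <;> omega)
          (by simp [Function.update_apply] <;> omega)
      · refine lineSum_congr _ _ _ _ fun n h1 h2 => ?_
        have hn0 : (0:ℤ) ≤ n := le_trans (le_min f2.1 e2.1) h1
        have hnN : n < (N:ℤ) := lt_of_lt_of_le h2 (max_le f2.2 e2.2)
        refine key (Function.update x 2 n) 0 2 (by decide) (fun i => by
            rcases hμ3 i with rfl | rfl | rfl <;> simp [Function.update_apply] <;> omega)
          (by simp [Function.update_apply] <;> omega)
          (by simp [Function.update_apply] <;> omega)
      · refine lineSum_congr _ _ _ _ fun n h1 h2 => ?_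
        have hn0 : (0:ℤ) ≤ n := le_trans (le_min f1.1 e1.1) h1
        have hnN : n < (N:ℤ) := lt_of_lt_of_le h2 (max_le f1.2 e1.2)
        refine key (Function.update x 1 n) 0 1 (by decide) (fun i => by
            rcases hμ3 i with rfl | rfl | rfl <;> simp [Function.update_apply] <;> omega)
          (by simp [Function.update_apply] <;> omega)
          (by simp [Function.update_apply] <;> omega)
    · simp only []
      rw [hbump x 1, rep1 A₁ y x, rep1 A₂ y x]
      congr 1
      congr 1
      congr 1
      · refine lineSum_congr _ _ _ _ fun n h1 h2 => ?_
        have hn0 : (0:ℤ) ≤ n := le_trans (le_min f2.1 e2.1) h1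
        have hnN : n < (N:ℤ) := lt_of_lt_of_le h2 (max_le f2.2 e2.2)
        refine key (Function.update x 2 n) 1 2 (by decide) (fun i => by
            rcases hμ3 i with rfl | rfl | rfl <;> simp [Function.update_apply] <;> omega)
          (by simp [Function.update_apply] <;> omega)
          (by simp [Function.update_apply] <;> omega)
      · refine lineSum_congr _ _ _ _ fun n h1 h2 => ?_
        have hn0 : (0:ℤ) ≤ n := le_trans (le_min f2.1 e2.1) h1
        have hnN : n < (N:ℤ) := lt_of_lt_of_le h2 (max_le f2.2 e2.2)
        refine key (Function.update (Function.update x 0 (y 0)) 2 n) 1 2 (by decide) (fun i => by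
            rcases hμ3 i with rfl | rfl | rfl <;> simp [Function.update_apply] <;> omega)
          (by simp [Function.update_apply] <;> omega)
          (by simp [Function.update_apply] <;> omega)
      · refine lineSum_congr _ _ _ _ fun n h1 h2 => ?_
        have hn0 : (0:ℤ) ≤ n := le_trans (le_min f0.1 e0.1) h1
        have hnN : n < (N:ℤ) := lt_of_lt_of_le h2 (max_le f0.2 e0.2)
        refine key (Function.update x 0 n) 1 0 (by decide) (fun i => by
            rcases hμ3 i with rfl | rfl | rfl <;> simp [Function.update_apply] <;> omega)
          (by simp [Function.update_apply] <;> omega)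
          (by simp [Function.update_apply] <;> omega)
    · simp only []
      rw [hbump x 2, rep2 A₁ y x, rep2 A₂ y x]
      congr 1
      congr 1
      congr 1
      · refine lineSum_congr _ _ _ _ fun n h1 h2 => ?_
        have hn0 : (0:ℤ) ≤ n := le_trans (le_min f0.1 e0.1) h1
        have hnN : n < (N:ℤ) := lt_of_lt_of_le h2 (max_le f0.2 e0.2)
        refine key (Function.update x 0 n) 2 0 (by decide) (fun i => by
            rcases hμ3 i with rfl | rfl | rfl <;> simp [Function.update_apply] <;> omega)
          (by simp [Function.update_apply] <;> omega)
          (by simp [Function.update_apply] <;> omega)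
      · refine lineSum_congr _ _ _ _ fun n h1 h2 => ?_
        have hn0 : (0:ℤ) ≤ n := le_trans (le_min f0.1 e0.1) h1
        have hnN : n < (N:ℤ) := lt_of_lt_of_le h2 (max_le f0.2 e0.2)
        refine key (Function.update (Function.update x 1 (y 1)) 0 n) 2 0 (by decide) (fun i => by
            rcases hμ3 i with rfl | rfl | rfl <;> simp [Function.update_apply] <;> omega)
          (by simp [Function.update_apply] <;> omega)
          (by simp [Function.update_apply] <;> omega)
      · refine lineSum_congr _ _ _ _ fun n h1 h2 => ?_
        have hn0 : (0:ℤ) ≤ n := le_trans (le_min f1.1 e1.1) h1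
        have hnN : n < (N:ℤ) := lt_of_lt_of_le h2 (max_le f1.2 e1.2)
        refine key (Function.update x 1 n) 2 1 (by decide) (fun i => by
            rcases hμ3 i with rfl | rfl | rfl <;> simp [Function.update_apply] <;> omega)
          (by simp [Function.update_apply] <;> omega)
          (by simp [Function.update_apply] <;> omega)
  · -- decomposition and bound
    intro A
    refine ⟨⟨lamF A y, fun x μ _ _ => by ring⟩, ?_⟩
    intro M hM x μ hx hx'
    have hxB : ∀ i, 0 ≤ x i ∧ x i ≤ (N:ℤ) := (hBox x).1 hx
    have hyB : ∀ i, 0 ≤ y i ∧ y i ≤ (N:ℤ) := (hBox y).1 hy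
    have hx'B := (hBox _).1 hx'
    have hμN : x μ + 1 ≤ (N:ℤ) := by
      have h := (hx'B μ).2
      rwa [haddc, if_pos rfl] at h
    have hN1 : 1 ≤ (N:ℤ) := by have := (hxB μ).1; omega
    have key2 : ∀ (v : Fin 3 → ℤ) (α β : Fin 3), α ≠ β → (∀ i, 0 ≤ v i ∧ v i ≤ (N:ℤ)) →
        v α + 1 ≤ (N:ℤ) → v β + 1 ≤ (N:ℤ) → |plaq A v α β| ≤ M := by
      intro v α β hne hv hα hβ
      rw [← hplaq A v α β]
      obtain ⟨m1, m2, m3, m4⟩ := hmem v α β hne hv hα hβ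
      exact hM v α β m1 m2 m3 m4
    have hM0 : 0 ≤ M := by
      refine le_trans (abs_nonneg _) (key2 (fun _ => 0) 0 1 (by decide)
        (fun i => by constructor <;> simp <;> omega) (by simp <;> omega) (by simp <;> omega))
    have hDb : ∀ i : Fin 3, (((x i - y i).natAbs : ℕ) : ℝ) ≤ bondDist x μ := by
      intro i
      rw [hbd]
      have h : (x i - y i).natAbs ≤ Finset.univ.sup fun j => (x j - y j).natAbs :=
        Finset.le_sup (f := fun j => (x j - y j).natAbs) (Finset.mem_univ i)
      exact_mod_cast h.trans (le_max_left _ _)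
    have e0 := hxB 0; have e1 := hxB 1; have e2 := hxB 2
    have f0 := hyB 0; have f1 := hyB 1; have f2 := hyB 2
    rcases hμ3 μ with rfl | rfl | rfl
    · simp only []
      rw [hbump x 0, rep0 A y x]
      have hL1 : |lineSum (fun n => plaq A (Function.update (Function.update x 2 (y 2)) 1 n) 0 1) (y 1) (x 1)|
          ≤ (((x 1 - y 1).natAbs : ℕ) : ℝ) * M := by
        refine lineSum_abs_le _ _ _ _ fun n h1 h2 => ?_
        have hn0 : (0:ℤ) ≤ n := le_trans (le_min f1.1 e1.1) h1
        have hnN : n < (N:ℤ) := lt_of_lt_of_le h2 (max_le f1.2 e1.2)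
        refine key2 (Function.update (Function.update x 2 (y 2)) 1 n) 0 1 (by decide) (fun i => by
            rcases hμ3 i with rfl | rfl | rfl <;> simp [Function.update_apply] <;> omega)
          (by simp [Function.update_apply] <;> omega)
          (by simp [Function.update_apply] <;> omega)
      have hL2 : |lineSum (fun n => plaq A (Function.update x 2 n) 0 2) (y 2) (x 2)|
          ≤ (((x 2 - y 2).natAbs : ℕ) : ℝ) * M := by
        refine lineSum_abs_le _ _ _ _ fun n h1 h2 => ?_
        have hn0 : (0:ℤ) ≤ n := le_trans (le_min f2.1 e2.1) h1
        have hnN : n < (N:ℤ) := lt_of_lt_of_le h2 (max_le f2.2 e2.2)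
        refine key2 (Function.update x 2 n) 0 2 (by decide) (fun i => by
            rcases hμ3 i with rfl | rfl | rfl <;> simp [Function.update_apply] <;> omega)
          (by simp [Function.update_apply] <;> omega)
          (by simp [Function.update_apply] <;> omega)
      have hL3 : |lineSum (fun n => plaq A (Function.update x 1 n) 0 1) (y 1) (x 1)|
          ≤ (((x 1 - y 1).natAbs : ℕ) : ℝ) * M := by
        refine lineSum_abs_le _ _ _ _ fun n h1 h2 => ?_
        have hn0 : (0:ℤ) ≤ n := le_trans (le_min f1.1 e1.1) h1
        have hnN : n < (N:ℤ) := lt_of_lt_of_le h2 (max_le f1.2 e1.2)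
        refine key2 (Function.update x 1 n) 0 1 (by decide) (fun i => by
            rcases hμ3 i with rfl | rfl | rfl <;> simp [Function.update_apply] <;> omega)
          (by simp [Function.update_apply] <;> omega)
          (by simp [Function.update_apply] <;> omega)
      have hd1 := hDb 1
      have hd2 := hDb 2
      have hd3 := hDb 1
      have m1 := mul_le_mul_of_nonneg_right hd1 hM0
      have m2 := mul_le_mul_of_nonneg_right hd2 hM0
      have m3 := mul_le_mul_of_nonneg_right hd3 hM0
      rw [abs_mul]
      have h3 : |(-(1/3) : ℝ)| = 1/3 := by norm_num
      rw [h3]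
      have habs := abs_add_three
        (lineSum (fun n => plaq A (Function.update (Function.update x 2 (y 2)) 1 n) 0 1) (y 1) (x 1))
        (lineSum (fun n => plaq A (Function.update x 2 n) 0 2) (y 2) (x 2))
        (lineSum (fun n => plaq A (Function.update x 1 n) 0 1) (y 1) (x 1))
      linarith
    · simp only []
      rw [hbump x 1, rep1 A y x]
      have hL1 : |lineSum (fun n => plaq A (Function.update x 2 n) 1 2) (y 2) (x 2)|
          ≤ (((x 2 - y 2).natAbs : ℕ) : ℝ) * M := by
        refine lineSum_abs_le _ _ _ _ fun n h1 h2 => ?_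
        have hn0 : (0:ℤ) ≤ n := le_trans (le_min f2.1 e2.1) h1
        have hnN : n < (N:ℤ) := lt_of_lt_of_le h2 (max_le f2.2 e2.2)
        refine key2 (Function.update x 2 n) 1 2 (by decide) (fun i => by
            rcases hμ3 i with rfl | rfl | rfl <;> simp [Function.update_apply] <;> omega)
          (by simp [Function.update_apply] <;> omega)
          (by simp [Function.update_apply] <;> omega)
      have hL2 : |lineSum (fun n => plaq A (Function.update (Function.update x 0 (y 0)) 2 n) 1 2) (y 2) (x 2)|
          ≤ (((x 2 - y 2).natAbs : ℕ) : ℝ) * M := by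
        refine lineSum_abs_le _ _ _ _ fun n h1 h2 => ?_
        have hn0 : (0:ℤ) ≤ n := le_trans (le_min f2.1 e2.1) h1
        have hnN : n < (N:ℤ) := lt_of_lt_of_le h2 (max_le f2.2 e2.2)
        refine key2 (Function.update (Function.update x 0 (y 0)) 2 n) 1 2 (by decide) (fun i => by
            rcases hμ3 i with rfl | rfl | rfl <;> simp [Function.update_apply] <;> omega)
          (by simp [Function.update_apply] <;> omega)
          (by simp [Function.update_apply] <;> omega)
      have hL3 : |lineSum (fun n => plaq A (Function.update x 0 n) 1 0) (y 0) (x 0)|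
          ≤ (((x 0 - y 0).natAbs : ℕ) : ℝ) * M := by
        refine lineSum_abs_le _ _ _ _ fun n h1 h2 => ?_
        have hn0 : (0:ℤ) ≤ n := le_trans (le_min f0.1 e0.1) h1
        have hnN : n < (N:ℤ) := lt_of_lt_of_le h2 (max_le f0.2 e0.2)
        refine key2 (Function.update x 0 n) 1 0 (by decide) (fun i => by
            rcases hμ3 i with rfl | rfl | rfl <;> simp [Function.update_apply] <;> omega)
          (by simp [Function.update_apply] <;> omega)
          (by simp [Function.update_apply] <;> omega)
      have hd1 := hDb 2
      have hd2 := hDb 2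
      have hd3 := hDb 0
      have m1 := mul_le_mul_of_nonneg_right hd1 hM0
      have m2 := mul_le_mul_of_nonneg_right hd2 hM0
      have m3 := mul_le_mul_of_nonneg_right hd3 hM0
      rw [abs_mul]
      have h3 : |(-(1/3) : ℝ)| = 1/3 := by norm_num
      rw [h3]
      have habs := abs_add_three
        (lineSum (fun n => plaq A (Function.update x 2 n) 1 2) (y 2) (x 2))
        (lineSum (fun n => plaq A (Function.update (Function.update x 0 (y 0)) 2 n) 1 2) (y 2) (x 2))
        (lineSum (fun n => plaq A (Function.update x 0 n) 1 0) (y 0) (x 0))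
      linarith
    · simp only []
      rw [hbump x 2, rep2 A y x]
      have hL1 : |lineSum (fun n => plaq A (Function.update x 0 n) 2 0) (y 0) (x 0)|
          ≤ (((x 0 - y 0).natAbs : ℕ) : ℝ) * M := by
        refine lineSum_abs_le _ _ _ _ fun n h1 h2 => ?_
        have hn0 : (0:ℤ) ≤ n := le_trans (le_min f0.1 e0.1) h1
        have hnN : n < (N:ℤ) := lt_of_lt_of_le h2 (max_le f0.2 e0.2)
        refine key2 (Function.update x 0 n) 2 0 (by decide) (fun i => by
            rcases hμ3 i with rfl | rfl | rfl <;> simp [Function.update_apply] <;> omega)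
          (by simp [Function.update_apply] <;> omega)
          (by simp [Function.update_apply] <;> omega)
      have hL2 : |lineSum (fun n => plaq A (Function.update (Function.update x 1 (y 1)) 0 n) 2 0) (y 0) (x 0)|
          ≤ (((x 0 - y 0).natAbs : ℕ) : ℝ) * M := by
        refine lineSum_abs_le _ _ _ _ fun n h1 h2 => ?_
        have hn0 : (0:ℤ) ≤ n := le_trans (le_min f0.1 e0.1) h1
        have hnN : n < (N:ℤ) := lt_of_lt_of_le h2 (max_le f0.2 e0.2)
        refine key2 (Function.update (Function.update x 1 (y 1)) 0 n) 2 0 (by decide) (fun i => by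
            rcases hμ3 i with rfl | rfl | rfl <;> simp [Function.update_apply] <;> omega)
          (by simp [Function.update_apply] <;> omega)
          (by simp [Function.update_apply] <;> omega)
      have hL3 : |lineSum (fun n => plaq A (Function.update x 1 n) 2 1) (y 1) (x 1)|
          ≤ (((x 1 - y 1).natAbs : ℕ) : ℝ) * M := by
        refine lineSum_abs_le _ _ _ _ fun n h1 h2 => ?_
        have hn0 : (0:ℤ) ≤ n := le_trans (le_min f1.1 e1.1) h1
        have hnN : n < (N:ℤ) := lt_of_lt_of_le h2 (max_le f1.2 e1.2)
        refine key2 (Function.update x 1 n) 2 1 (by decide) (fun i => by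
            rcases hμ3 i with rfl | rfl | rfl <;> simp [Function.update_apply] <;> omega)
          (by simp [Function.update_apply] <;> omega)
          (by simp [Function.update_apply] <;> omega)
      have hd1 := hDb 0
      have hd2 := hDb 0
      have hd3 := hDb 1
      have m1 := mul_le_mul_of_nonneg_right hd1 hM0
      have m2 := mul_le_mul_of_nonneg_right hd2 hM0
      have m3 := mul_le_mul_of_nonneg_right hd3 hM0
      rw [abs_mul]
      have h3 : |(-(1/3) : ℝ)| = 1/3 := by norm_num
      rw [h3]
      have habs := abs_add_three
        (lineSum (fun n => plaq A (Function.update x 0 n) 2 0) (y 0) (x 0))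
        (lineSum (fun n => plaq A (Function.update (Function.update x 1 (y 1)) 0 n) 2 0) (y 0) (x 0))
        (lineSum (fun n => plaq A (Function.update x 1 n) 2 1) (y 1) (x 1))
      linarith
end

section
/- Let η > 0 and m ≥ 0, and define ω ≥ 0 by cosh(ηω) = 1 + η²m²/2. Then (a) ω ≤ m, and (b) if ηm ≤ 5 then ω ≥ m/(2 cosh 5). In particular there is an absolute constant c > 0 with c·m ≤ ω ≤ m whenever ηm ≤ 5. -/
open Real in
lemma aux_cosh_lower (x : ℝ) (hx : 0 ≤ x) : 1 + x ^ 2 / 2 ≤ Real.cosh x := by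
  have h1 : Real.cosh x = 2 * Real.cosh (x / 2) ^ 2 - 1 := by
    have := Real.cosh_two_mul (x / 2)
    rw [show 2 * (x / 2) = x by ring] at this
    have hs := Real.cosh_sq (x / 2)
    linarith
  have h2 : Real.cosh (x / 2) ^ 2 = Real.sinh (x / 2) ^ 2 + 1 := Real.cosh_sq (x / 2)
  have h3 : x / 2 ≤ Real.sinh (x / 2) := Real.self_le_sinh_iff.2 (by linarith)
  have h4 : (x / 2) ^ 2 ≤ Real.sinh (x / 2) ^ 2 := by
    apply sq_le_sq' <;> nlinarith
  nlinarith

open Real in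
lemma aux_sinh_upper (x : ℝ) (hx0 : 0 ≤ x) (hx5 : x ≤ 5) :
    Real.sinh x ≤ x * Real.cosh 5 := by
  have hmono : MonotoneOn (fun y => y * Real.cosh 5 - Real.sinh y) (Set.Icc 0 5) := by
    apply monotoneOn_of_deriv_nonneg (convex_Icc 0 5)
    · exact (Continuous.sub (continuous_id.mul continuous_const) Real.continuous_sinh).continuousOn
    · intro y hy
      exact ((differentiable_id.mul (differentiable_const _)).sub Real.differentiable_sinh) y
        |>.differentiableWithinAt
    · intro y hy
      rw [interior_Icc] at hy
      have hd : deriv (fun y => y * Real.cosh 5 - Real.sinh y) y = Real.cosh 5 - Real.cosh y := by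
        simp [deriv_sub, Real.deriv_sinh]
      rw [hd]
      have : Real.cosh y ≤ Real.cosh 5 := by
        rw [Real.cosh_le_cosh]
        rw [abs_of_nonneg hy.1.le, abs_of_nonneg (by norm_num : (0:ℝ) ≤ 5)]
        exact hy.2.le
      linarith
  have := hmono (Set.mem_Icc.2 ⟨le_refl 0, by norm_num⟩) (Set.mem_Icc.2 ⟨hx0, hx5⟩) hx0
  simpa [Real.sinh_zero] using this

/-- Lattice dispersion: if `cosh(ηω) = 1 + η²m²/2` with `η > 0`, `m ≥ 0`, `ω ≥ 0`, then
(a) `ω ≤ m`, and (b) if `ηm ≤ 5` then `ω ≥ m/(2 cosh 5)`. In particular there is an absolute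
constant `c > 0` with `c m ≤ ω ≤ m` whenever `ηm ≤ 5`. -/
theorem stmt15 (η m ω : ℝ) (hη : 0 < η) (hm : 0 ≤ m) (hω : 0 ≤ ω)
    (h : Real.cosh (η * ω) = 1 + η ^ 2 * m ^ 2 / 2) :
    ω ≤ m ∧ (η * m ≤ 5 → m / (2 * Real.cosh 5) ≤ ω) ∧
    (∃ c : ℝ, 0 < c ∧ (η * m ≤ 5 → c * m ≤ ω ∧ ω ≤ m)) := by
  have hcosh5 : 1 ≤ Real.cosh 5 := Real.one_le_cosh 5
  have hηm : 0 ≤ η * m := mul_nonneg hη.le hm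
  have hηω : 0 ≤ η * ω := mul_nonneg hη.le hω
  -- (a)
  have hA : ω ≤ m := by
    have h1 : 1 + (η * m) ^ 2 / 2 ≤ Real.cosh (η * m) := aux_cosh_lower _ hηm
    have h2 : Real.cosh (η * ω) ≤ Real.cosh (η * m) := by
      rw [h]; nlinarith
    rw [Real.cosh_le_cosh, abs_of_nonneg hηω, abs_of_nonneg hηm] at h2
    exact le_of_mul_le_mul_left h2 hη
  refine ⟨hA, ?_, ?_⟩
  · -- (b)
    intro h5
    have hx5 : η * ω ≤ 5 := le_trans (by nlinarith) h5
    have hsq : Real.cosh (η * ω) ^ 2 = Real.sinh (η * ω) ^ 2 + 1 := Real.cosh_sq _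
    have hc1 : 1 ≤ Real.cosh (η * ω) := Real.one_le_cosh _
    -- sinh² ≥ cosh - 1 = η²m²/2 ≥ (ηm/2)²
    have hs2 : (η * m / 2) ^ 2 ≤ Real.sinh (η * ω) ^ 2 := by nlinarith
    have hsnn : 0 ≤ Real.sinh (η * ω) := Real.sinh_nonneg_iff.2 hηω
    have hs : η * m / 2 ≤ Real.sinh (η * ω) := by nlinarith
    have hu : Real.sinh (η * ω) ≤ (η * ω) * Real.cosh 5 := aux_sinh_upper _ hηω hx5
    rw [div_le_iff₀ (by positivity)]
    nlinarith
  · refine ⟨1 / (2 * Real.cosh 5), by positivity, fun h5 => ⟨?_, hA⟩⟩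
    have := (by
      intro h5'
      have hx5 : η * ω ≤ 5 := le_trans (by nlinarith) h5'
      have hsq : Real.cosh (η * ω) ^ 2 = Real.sinh (η * ω) ^ 2 + 1 := Real.cosh_sq _
      have hc1 : 1 ≤ Real.cosh (η * ω) := Real.one_le_cosh _
      have hs2 : (η * m / 2) ^ 2 ≤ Real.sinh (η * ω) ^ 2 := by nlinarith
      have hsnn : 0 ≤ Real.sinh (η * ω) := Real.sinh_nonneg_iff.2 hηω
      have hs : η * m / 2 ≤ Real.sinh (η * ω) := by nlinarith
      have hu : Real.sinh (η * ω) ≤ (η * ω) * Real.cosh 5 := aux_sinh_upper _ hηω hx5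
      rw [div_le_iff₀ (by positivity)]
      nlinarith : η * m ≤ 5 → m / (2 * Real.cosh 5) ≤ ω) h5
    rw [div_mul_eq_mul_div, one_mul, div_le_iff₀ (by positivity)] at *
    linarith [this]
end
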